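/- Let r ≥ 3 and let T be a tree with k edges having a vertex x_0 adjacent to ℓ leaves of T, where ℓ > 3k/4 + (r-3)/2. Then every graph G containing no K_{2,r} as a subgraph satisfies ex*(G, T) ≤ (k-1)·|V(G)|/2, i.e. 2·ex*(G,T) ≤ (k-1)·|V(G)|. -/

import Mathlib

open SimpleGraph

/-- An edge coloring is proper on `H` if distinct edges of `H` sharing a vertex
receive different colors. -/
def IsProperEdgeColoring {V : Type*} (H : SimpleGraph V) (c : Sym2 V → ℕ) : Prop :=
  ∀ ⦃e₁ : Sym2 V⦄, e₁ ∈ H.edgeSet → ∀ ⦃e₂ : Sym2 V⦄, e₂ ∈ H.edgeSet →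
    e₁ ≠ e₂ → (∃ v, v ∈ e₁ ∧ v ∈ e₂) → c e₁ ≠ c e₂

/-- The graph `H`, edge colored by `c`, contains a rainbow copy of `F`:
there is an (injective) copy of `F` in `H` all of whose edges receive
pairwise distinct colors. -/
def HasRainbowCopy {V W : Type*} (H : SimpleGraph V) (c : Sym2 V → ℕ)
    (F : SimpleGraph W) : Prop :=
  ∃ f : W ↪ V, (∀ ⦃a b : W⦄, F.Adj a b → H.Adj (f a) (f b)) ∧
    ∀ ⦃a b a' b' : W⦄, F.Adj a b → F.Adj a' b' → s(a, b) ≠ s(a', b') →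
      c s(f a, f b) ≠ c s(f a', f b')

/-- `H` admits a proper edge coloring with no rainbow copy of `F`. -/
def RainbowFree {V W : Type*} (H : SimpleGraph V) (F : SimpleGraph W) : Prop :=
  ∃ c : Sym2 V → ℕ, IsProperEdgeColoring H c ∧ ¬ HasRainbowCopy H c F

/-- The rainbow extremal number `ex*(G,F)`: the maximum number of edges of a
subgraph `H` of `G` admitting a proper edge coloring with no rainbow copy of `F`. -/
noncomputable def rainbowExtremalNumber {V W : Type*} [Fintype V]
    (G : SimpleGraph V) (F : SimpleGraph W) : ℕ :=
  sSup {m | ∃ H : SimpleGraph V, H ≤ G ∧ RainbowFree H F ∧ m = H.edgeSet.ncard}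

/-- The minimum degree of a subgraph, taken over its own vertex set. -/
noncomputable def subMinDegree {V : Type*} {G : SimpleGraph V} (H : G.Subgraph) : ℕ :=
  sInf {d | ∃ v ∈ H.verts, d = (H.neighborSet v).ncard}

/-- `δ*(G,F)`: the maximum of the minimum degree over all subgraphs `H` of `G`
admitting a proper edge coloring with no rainbow copy of `F`. -/
noncomputable def rainbowMinDegree {V W : Type*} [Fintype V]
    (G : SimpleGraph V) (F : SimpleGraph W) : ℕ :=
  sSup {m | ∃ H : G.Subgraph, RainbowFree H.spanningCoe F ∧ m = subMinDegree H}

/-- The `n`-dimensional hypercube graph `Q_n`. -/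
def cubeGraph (n : ℕ) : SimpleGraph (Fin n → Bool) where
  Adj x y := {i | x i ≠ y i}.ncard = 1
  symm := by
    constructor; intro x y h
    have hs : {i | y i ≠ x i} = {i | x i ≠ y i} := by ext i; simp [ne_comm]
    rw [hs]; exact h
  loopless := by
    constructor; intro x h
    simp at h

/-- The star `K_{1,k}` with `k` edges. -/
def starGraph (k : ℕ) : SimpleGraph (Fin (k + 1)) where
  Adj i j := i ≠ j ∧ (i = 0 ∨ j = 0)
  symm := by constructor; intro i j h; exact ⟨h.1.symm, h.2.symm⟩
  loopless := by constructor; intro i h; exact h.1 rfl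

/-- `G` contains a copy of `F` as a subgraph. -/
def ContainsCopy {V W : Type*} (G : SimpleGraph V) (F : SimpleGraph W) : Prop :=
  ∃ f : W ↪ V, ∀ ⦃a b : W⦄, F.Adj a b → G.Adj (f a) (f b)

namespace Stmt17Aux
open Finset

variable {W : Type*} {T : SimpleGraph W}

noncomputable def ppath (hT : T.IsTree) (x0 w : W) : T.Walk w x0 :=
  (hT.existsUnique_path w x0).choose

lemma ppath_isPath (hT : T.IsTree) (x0 w : W) : (ppath hT x0 w).IsPath :=
  (hT.existsUnique_path w x0).choose_spec.1

lemma ppath_unique (hT : T.IsTree) (x0 w : W) (q : T.Walk w x0) (hq : q.IsPath) :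
    q = ppath hT x0 w :=
  (hT.existsUnique_path w x0).choose_spec.2 q hq

noncomputable def par (hT : T.IsTree) (x0 w : W) : W := (ppath hT x0 w).getVert 1

noncomputable def depth (hT : T.IsTree) (x0 w : W) : ℕ := (ppath hT x0 w).length

lemma ppath_x0 (hT : T.IsTree) (x0 : W) : ppath hT x0 x0 = Walk.nil :=
  (ppath_unique hT x0 x0 Walk.nil Walk.IsPath.nil).symm

lemma par_x0 (hT : T.IsTree) (x0 : W) : par hT x0 x0 = x0 := by
  unfold par; rw [ppath_x0]; rfl

lemma adj_par (hT : T.IsTree) (x0 : W) {w : W} (hw : w ≠ x0) : T.Adj w (par hT x0 w) :=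
  Walk.adj_snd (Walk.not_nil_of_ne hw)

lemma depth_par (hT : T.IsTree) (x0 : W) {w : W} (hw : w ≠ x0) :
    depth hT x0 (par hT x0 w) < depth hT x0 w := by
  have hn : ¬ (ppath hT x0 w).Nil := Walk.not_nil_of_ne hw
  have ht : (ppath hT x0 w).tail.IsPath := (ppath_isPath hT x0 w).tail
  have h2 : (ppath hT x0 w).tail = ppath hT x0 (par hT x0 w) :=
    ppath_unique hT x0 _ _ ht
  have h3 : (ppath hT x0 w).tail.length + 1 = (ppath hT x0 w).length :=
    Walk.length_tail_add_one hn
  unfold depth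
  rw [← h2]
  exact (Nat.lt_succ_self _).trans_eq h3

lemma parent_or [DecidableEq W] (hT : T.IsTree) (x0 : W) {a b : W} (hab : T.Adj a b) :
    par hT x0 a = b ∨ par hT x0 b = a := by
  by_cases h : a ∈ (ppath hT x0 b).support
  · right
    have ht1 : ((ppath hT x0 b).takeUntil a h).IsPath :=
      (ppath_isPath hT x0 b).takeUntil h
    have hs : (Walk.cons hab.symm Walk.nil : T.Walk b a).IsPath := by
      rw [Walk.cons_isPath_iff]
      exact ⟨Walk.IsPath.nil, by simp [hab.ne']⟩
    have heq : ((ppath hT x0 b).takeUntil a h) = Walk.cons hab.symm Walk.nil := by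
      have := hT.IsAcyclic.path_unique ⟨_, ht1⟩ ⟨_, hs⟩
      exact congrArg Subtype.val this
    have hspec := (ppath hT x0 b).take_spec h
    rw [heq] at hspec
    have : par hT x0 b =
        ((Walk.cons hab.symm Walk.nil).append ((ppath hT x0 b).dropUntil a h)).getVert 1 := by
      unfold par; rw [hspec]
    rw [this]
    rw [Walk.cons_append, Walk.getVert_cons_succ]
    simp [Walk.getVert_zero]
  · left
    have hq : (Walk.cons hab (ppath hT x0 b)).IsPath := by
      rw [Walk.cons_isPath_iff]; exact ⟨ppath_isPath hT x0 b, h⟩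
    have h2 := ppath_unique hT x0 a _ hq
    unfold par
    rw [← h2, Walk.getVert_cons_succ]
    simp [Walk.getVert_zero]


variable {V : Type*} [DecidableEq V] [Fintype V]

/-- number of ordered adjacent pairs inside `s` -/
def ec (H : SimpleGraph V) [DecidableRel H.Adj] (s : Finset V) : ℕ :=
  ((s ×ˢ s).filter fun p => H.Adj p.1 p.2).card

def degIn (H : SimpleGraph V) [DecidableRel H.Adj] (s : Finset V) (v : V) : ℕ :=
  (H.neighborFinset v ∩ s).card

lemma ec_eq_sum (H : SimpleGraph V) [DecidableRel H.Adj] (s : Finset V) :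
    ec H s = ∑ v ∈ s, degIn H s v := by
  rw [ec, Finset.card_eq_sum_card_fiberwise
    (f := Prod.fst) (t := s) (fun p hp => (Finset.mem_product.1 (Finset.mem_filter.1 hp).1).1)]
  refine Finset.sum_congr rfl fun v hv => ?_
  have hset : (((s ×ˢ s).filter fun p => H.Adj p.1 p.2).filter fun p => p.1 = v)
      = {v} ×ˢ (H.neighborFinset v ∩ s) := by
    ext ⟨a, b⟩
    simp only [mem_filter, mem_product, mem_singleton, mem_inter,
      SimpleGraph.mem_neighborFinset]
    constructor
    · rintro ⟨⟨⟨ha, hb⟩, hadj⟩, rfl⟩; exact ⟨rfl, hadj, hb⟩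
    · rintro ⟨rfl, hadj, hb⟩; exact ⟨⟨⟨hv, hb⟩, hadj⟩, rfl⟩
  rw [hset, degIn]
  simp

lemma ec_erase (H : SimpleGraph V) [DecidableRel H.Adj] {s : Finset V} {v : V} (hv : v ∈ s) :
    ec H s = ec H (s.erase v) + 2 * degIn H s v := by
  have hvN : v ∉ H.neighborFinset v ∩ s := by
    simp [SimpleGraph.mem_neighborFinset]
  have hsplit : ((s ×ˢ s).filter fun p => H.Adj p.1 p.2) =
      ((((s.erase v) ×ˢ (s.erase v)).filter fun p => H.Adj p.1 p.2)
        ∪ ({v} ×ˢ (H.neighborFinset v ∩ s)))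
        ∪ ((H.neighborFinset v ∩ s) ×ˢ {v}) := by
    ext ⟨a, b⟩
    simp only [mem_union, mem_filter, mem_product, mem_erase, mem_singleton, mem_inter,
      SimpleGraph.mem_neighborFinset]
    constructor
    · rintro ⟨⟨ha, hb⟩, hadj⟩
      by_cases hav : a = v
      · subst hav; exact Or.inl (Or.inr ⟨rfl, hadj, hb⟩)
      · by_cases hbv : b = v
        · subst hbv; exact Or.inr ⟨⟨hadj.symm, ha⟩, rfl⟩
        · exact Or.inl (Or.inl ⟨⟨⟨hav, ha⟩, hbv, hb⟩, hadj⟩)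
    · rintro ((⟨⟨⟨_, ha⟩, _, hb⟩, hadj⟩ | ⟨rfl, hadj, hb⟩) | ⟨⟨hadj, ha⟩, rfl⟩)
      · exact ⟨⟨ha, hb⟩, hadj⟩
      · exact ⟨⟨hv, hb⟩, hadj⟩
      · exact ⟨⟨ha, hv⟩, hadj.symm⟩
  have hd1 : Disjoint (((s.erase v) ×ˢ (s.erase v)).filter fun p => H.Adj p.1 p.2)
      ({v} ×ˢ (H.neighborFinset v ∩ s)) := by
    rw [Finset.disjoint_left]
    rintro ⟨a, b⟩ h1 h2
    have := (Finset.mem_product.1 (Finset.mem_filter.1 h1).1).1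
    have hav := Finset.mem_singleton.1 (Finset.mem_product.1 h2).1
    exact (Finset.mem_erase.1 this).1 hav
  have hd2 : Disjoint ((((s.erase v) ×ˢ (s.erase v)).filter fun p => H.Adj p.1 p.2)
      ∪ ({v} ×ˢ (H.neighborFinset v ∩ s)))
      ((H.neighborFinset v ∩ s) ×ˢ {v}) := by
    rw [Finset.disjoint_left]
    rintro ⟨a, b⟩ h1 h2
    have hb : b = v := Finset.mem_singleton.1 (Finset.mem_product.1 h2).2
    rcases Finset.mem_union.1 h1 with h1 | h1
    · have := (Finset.mem_product.1 (Finset.mem_filter.1 h1).1).2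
      exact (Finset.mem_erase.1 this).1 hb
    · have ha : a = v := Finset.mem_singleton.1 (Finset.mem_product.1 h1).1
      have := (Finset.mem_product.1 h1).2
      subst ha hb
      exact hvN this
  rw [ec, hsplit, Finset.card_union_of_disjoint hd2, Finset.card_union_of_disjoint hd1]
  rw [ec, degIn]
  simp only [Finset.card_product, Finset.card_singleton, one_mul, mul_one]
  omega

lemma exists_good (H : SimpleGraph V) [DecidableRel H.Adj] (k : ℕ) :
    ∀ (n : ℕ) (s : Finset V), s.card ≤ n → (k - 1) * s.card < ec H s →
    ∃ B : Finset V, B.Nonempty ∧ (∀ v ∈ B, k ≤ 2 * degIn H B v) ∧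
      (k - 1) * B.card < ec H B := by
  intro n
  induction n with
  | zero =>
    intro s hs h
    have : s = ∅ := Finset.card_eq_zero.1 (Nat.le_zero.1 hs)
    subst this
    simp [ec] at h
  | succ n ih =>
    intro s hsn h
    by_cases hall : ∀ v ∈ s, k ≤ 2 * degIn H s v
    · refine ⟨s, ?_, hall, h⟩
      rcases Finset.eq_empty_or_nonempty s with rfl | hne
      · simp [ec] at h
      · exact hne
    · push_neg at hall
      obtain ⟨v, hv, hlt⟩ := hall
      have he := ec_erase H hv
      obtain ⟨a, ha⟩ : ∃ a, s.card = a + 1 :=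
        ⟨s.card - 1, by have := Finset.card_pos.2 ⟨v, hv⟩; omega⟩
      have hc1 : (s.erase v).card = s.card - 1 := Finset.card_erase_of_mem hv
      apply ih (s.erase v) (by omega)
      rw [he, ha, Nat.mul_succ] at h
      rw [hc1, ha]
      simp only [Nat.add_sub_cancel]
      generalize hX : (k - 1) * a = X at h ⊢
      omega

lemma exists_big (H : SimpleGraph V) [DecidableRel H.Adj] {k : ℕ} {B : Finset V}
    (h : (k - 1) * B.card < ec H B) : ∃ v ∈ B, k ≤ degIn H B v := by
  by_contra hcon
  push_neg at hcon
  have hsum : ec H B ≤ (k - 1) * B.card := by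
    rw [ec_eq_sum]
    calc ∑ v ∈ B, degIn H B v ≤ ∑ _v ∈ B, (k - 1) :=
          Finset.sum_le_sum fun v hv => by have := hcon v hv; omega
      _ = B.card * (k - 1) := by rw [Finset.sum_const, smul_eq_mul]
      _ = (k - 1) * B.card := Nat.mul_comm _ _
  omega


def Emb {W : Type*} (H : SimpleGraph V) (c : Sym2 V → ℕ) (B : Finset V) (v0 : V)
    (pr : W → W) (x0 : W) (s : Finset W) (f : W → V) : Prop :=
  f x0 = v0 ∧ Set.InjOn f ↑s ∧ (∀ w ∈ s, f w ∈ B) ∧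
  (∀ w ∈ s, w ≠ x0 → H.Adj (f (pr w)) (f w)) ∧
  (∀ w ∈ s, w ≠ x0 → pr w ≠ x0 → ¬ H.Adj v0 (f w)) ∧
  (∀ w ∈ s, ∀ w' ∈ s, w ≠ x0 → w' ≠ x0 → w ≠ w' →
    c s(f (pr w), f w) ≠ c s(f (pr w'), f w'))

lemma greedy {W : Type*} [DecidableEq W]
    (H : SimpleGraph V) [DecidableRel H.Adj] (c : Sym2 V → ℕ)
    (hc : IsProperEdgeColoring H c)
    (r k ℓ : ℕ) (hkey : 3 * k + 2 * r ≤ 4 * ℓ + 5) (hr : 3 ≤ r)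
    (B : Finset V) (hB : ∀ v ∈ B, k ≤ 2 * degIn H B v)
    (v0 : V) (hv0B : v0 ∈ B) (hv0 : k ≤ degIn H B v0)
    (hK : ∀ x y : V, x ≠ y → ((H.neighborFinset x) ∩ (H.neighborFinset y)).card < r)
    (pr : W → W) (D : W → ℕ) (x0 : W)
    (hD : ∀ w, w ≠ x0 → D (pr w) < D w)
    (S' : Finset W) (hS'card : S'.card + ℓ = k + 1) :
    ∀ (n : ℕ) (s : Finset W), s.card ≤ n → x0 ∈ s → s ⊆ S' →
      (∀ w ∈ s, w ≠ x0 → pr w ∈ s) →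
      ∃ f : W → V, Emb H c B v0 pr x0 s f := by
  intro n
  induction n with
  | zero =>
    intro s hsn hx0s _ _
    exact absurd (Finset.card_pos.2 ⟨x0, hx0s⟩) (by omega)
  | succ n ih =>
    intro s hsn hx0s hsS hscl
    by_cases hcase : s.card ≤ n
    · exact ih s hcase hx0s hsS hscl
    -- s.card = n + 1
    by_cases hsing : s = {x0}
    · subst hsing
      refine ⟨fun _ => v0, rfl, ?_, ?_, ?_, ?_, ?_⟩
      · intro a ha b hb _
        simp only [Finset.coe_singleton, Set.mem_singleton_iff] at ha hb
        rw [ha, hb]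
      · intro w hw; exact hv0B
      · intro w hw hwx; exact absurd (Finset.mem_singleton.1 hw) hwx
      · intro w hw hwx; exact absurd (Finset.mem_singleton.1 hw) hwx
      · intro w hw w' hw' hwx; exact absurd (Finset.mem_singleton.1 hw) hwx
    · have hne : (s.erase x0).Nonempty := by
        rcases Finset.eq_empty_or_nonempty (s.erase x0) with he | hne
        · exfalso; apply hsing
          apply Finset.eq_singleton_iff_unique_mem.2
          refine ⟨hx0s, fun y hy => ?_⟩
          by_contra hyx
          exact absurd (Finset.mem_erase.2 ⟨hyx, hy⟩) (by simp [he])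
        · exact hne
      obtain ⟨w, hwmem, hwmax⟩ := Finset.exists_max_image (s.erase x0) D hne
      have hw_s : w ∈ s := Finset.mem_of_mem_erase hwmem
      have hwx0 : w ≠ x0 := Finset.ne_of_mem_erase hwmem
      set s' := s.erase w with hs'def
      have hx0s' : x0 ∈ s' := Finset.mem_erase.2 ⟨Ne.symm hwx0, hx0s⟩
      have hs'S : s' ⊆ S' := (Finset.erase_subset _ _).trans hsS
      have hs'cl : ∀ u ∈ s', u ≠ x0 → pr u ∈ s' := by
        intro u hu hux
        have hus : u ∈ s := Finset.mem_of_mem_erase hu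
        have h1 : pr u ∈ s := hscl u hus hux
        have h2 : pr u ≠ w := by
          intro hpw
          have := hD u hux
          rw [hpw] at this
          exact absurd (hwmax u (Finset.mem_erase.2 ⟨hux, hus⟩)) (by omega)
        exact Finset.mem_erase.2 ⟨h2, h1⟩
      have hs'n : s'.card ≤ n := by
        rw [hs'def]
        have := Finset.card_erase_of_mem hw_s
        omega
      obtain ⟨f', hf'x0, hf'inj, hf'B, hf'adj, hf'nbr, hf'col⟩ := ih s' hs'n hx0s' hs'S hs'cl
      set p := pr w with hpdef
      have hpS : p ∈ s' := by
        have h1 : p ∈ s := hscl w hw_s hwx0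
        have h2 : p ≠ w := by
          intro hpw
          have := hD w hwx0
          rw [← hpdef, hpw] at this
          omega
        exact Finset.mem_erase.2 ⟨h2, h1⟩
      have hfpB : f' p ∈ B := hf'B p hpS
      set N1 := H.neighborFinset (f' p) ∩ B with hN1def
      set colorBadN := N1.filter
        (fun u => ∃ w' ∈ s'.erase x0, c s(f' (pr w'), f' w') = c s(f' p, u)) with hcBdef
      set nbrBad := if p = x0 then (∅ : Finset V)
        else (H.neighborFinset (f' p) ∩ H.neighborFinset v0) with hnbdef
      set cand := N1 \ ((s'.image f' ∪ colorBadN) ∪ nbrBad) with hcanddef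
      -- cardinality bounds
      have hacard : s'.card + ℓ ≤ k := by
        have h1 : s' ⊂ S' := by
          refine Finset.ssubset_iff_of_subset hs'S |>.2 ⟨w, hsS hw_s, ?_⟩
          simp [hs'def]
        have := Finset.card_lt_card h1
        omega
      have himg : (s'.image f' ∩ N1).card + 1 ≤ s'.card := by
        have h1 : f' p ∉ N1 := by
          simp only [hN1def, Finset.mem_inter, SimpleGraph.mem_neighborFinset]
          rintro ⟨h, -⟩; exact H.irrefl h
        have h2 : s'.image f' ∩ N1 ⊆ (s'.image f').erase (f' p) := by
          intro x hx
          rcases Finset.mem_inter.1 hx with ⟨hx1, hx2⟩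
          refine Finset.mem_erase.2 ⟨?_, hx1⟩
          rintro rfl; exact h1 hx2
        have h3 := Finset.card_le_card h2
        have h4 := Finset.card_erase_of_mem (Finset.mem_image_of_mem f' hpS)
        have h5 := Finset.card_image_le (s := s') (f := f')
        have h6 : 0 < (s'.image f').card :=
          Finset.card_pos.2 ⟨f' p, Finset.mem_image_of_mem f' hpS⟩
        omega
      have hcolor : colorBadN.card ≤ (s'.erase x0).card := by
        apply Finset.card_le_card_of_injOn
          (fun u => if h : ∃ w' ∈ s'.erase x0, c s(f' (pr w'), f' w') = c s(f' p, u)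
            then h.choose else x0)
        · intro u hu
          have hex := (Finset.mem_filter.1 hu).2
          dsimp only
          rw [dif_pos hex]
          exact hex.choose_spec.1
        · intro u1 hu1 u2 hu2 heq
          simp only [Finset.mem_coe] at hu1 hu2
          have hex1 := (Finset.mem_filter.1 hu1).2
          have hex2 := (Finset.mem_filter.1 hu2).2
          dsimp only at heq
          rw [dif_pos hex1, dif_pos hex2] at heq
          have hc1 := hex1.choose_spec.2
          have hc2 := hex2.choose_spec.2
          rw [heq] at hc1
          have hcc : c s(f' p, u1) = c s(f' p, u2) := hc1 ▸ hc2
          by_contra hne12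
          have hadj1 : H.Adj (f' p) u1 := by
            have := (Finset.mem_inter.1 (Finset.mem_filter.1 hu1).1).1
            exact (SimpleGraph.mem_neighborFinset _ _ _).1 this
          have hadj2 : H.Adj (f' p) u2 := by
            have := (Finset.mem_inter.1 (Finset.mem_filter.1 hu2).1).1
            exact (SimpleGraph.mem_neighborFinset _ _ _).1 this
          have hedne : s(f' p, u1) ≠ s(f' p, u2) := by
            intro h
            rcases Sym2.eq_iff.1 h with ⟨-, h2⟩ | ⟨h1, -⟩
            · exact hne12 h2
            · exact hadj2.ne h1
          have he1 : s(f' p, u1) ∈ H.edgeSet := hadj1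
          have he2 : s(f' p, u2) ∈ H.edgeSet := hadj2
          exact hc he1 he2 hedne
            ⟨f' p, Sym2.mem_mk_left _ _, Sym2.mem_mk_left _ _⟩ hcc
      have hcand : cand.Nonempty := by
        rw [Finset.nonempty_iff_ne_empty]
        intro hemp
        have hsub : N1 ⊆ (s'.image f' ∩ N1) ∪ colorBadN ∪ (nbrBad ∩ N1) := by
          intro u hu
          have : u ∉ cand := by rw [hemp]; exact Finset.notMem_empty u
          rw [hcanddef, Finset.mem_sdiff] at this
          push_neg at this
          rcases Finset.mem_union.1 (this hu) with h1 | h1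
          · rcases Finset.mem_union.1 h1 with h2 | h2
            · exact Finset.mem_union.2 (Or.inl (Finset.mem_union.2
                (Or.inl (Finset.mem_inter.2 ⟨h2, hu⟩))))
            · exact Finset.mem_union.2 (Or.inl (Finset.mem_union.2 (Or.inr h2)))
          · exact Finset.mem_union.2 (Or.inr (Finset.mem_inter.2 ⟨h1, hu⟩))
        have hN1le : N1.card ≤ (s'.image f' ∩ N1).card + colorBadN.card + (nbrBad ∩ N1).card := by
          calc N1.card ≤ ((s'.image f' ∩ N1) ∪ colorBadN ∪ (nbrBad ∩ N1)).card :=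
                Finset.card_le_card hsub
            _ ≤ ((s'.image f' ∩ N1) ∪ colorBadN).card + (nbrBad ∩ N1).card :=
                Finset.card_union_le _ _
            _ ≤ (s'.image f' ∩ N1).card + colorBadN.card + (nbrBad ∩ N1).card := by
                have := Finset.card_union_le (s'.image f' ∩ N1) colorBadN
                omega
        have herase : (s'.erase x0).card + 1 = s'.card := by
          have := Finset.card_erase_of_mem hx0s'
          have : 0 < s'.card := Finset.card_pos.2 ⟨x0, hx0s'⟩
          have h2 := Finset.card_erase_of_mem hx0s'
          omega
        by_cases hpx : p = x0
        · have hfp : f' p = v0 := by rw [hpx, hf'x0]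
          have hN1big : k ≤ N1.card := by
            have : degIn H B v0 = N1.card := by rw [hN1def, hfp]; rfl
            omega
          have hnb : nbrBad ∩ N1 = ∅ := by rw [hnbdef, if_pos hpx]; simp
          rw [hnb] at hN1le
          simp only [Finset.card_empty] at hN1le
          omega
        · have hN1big : k ≤ 2 * N1.card := hB (f' p) hfpB
          have hnb : (nbrBad ∩ N1).card ≤ r - 1 := by
            have hfpv0 : f' p ≠ v0 := by
              intro heq
              exact hpx (hf'inj hpS (hx0s') (by rw [heq, hf'x0]))
            have := hK (f' p) v0 hfpv0
            calc (nbrBad ∩ N1).card ≤ nbrBad.card :=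
                  Finset.card_le_card (Finset.inter_subset_left)
              _ ≤ r - 1 := by rw [hnbdef, if_neg hpx]; omega
          omega
      obtain ⟨u, hu⟩ := hcand
      rw [hcanddef, Finset.mem_sdiff] at hu
      obtain ⟨huN1, hubad⟩ := hu
      have huimg : u ∉ s'.image f' := fun h =>
        hubad (Finset.mem_union.2 (Or.inl (Finset.mem_union.2 (Or.inl h))))
      have hucol : u ∉ colorBadN := fun h =>
        hubad (Finset.mem_union.2 (Or.inl (Finset.mem_union.2 (Or.inr h))))
      have hunbr : u ∉ nbrBad := fun h => hubad (Finset.mem_union.2 (Or.inr h))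
      have huB : u ∈ B := (Finset.mem_inter.1 huN1).2
      have huadj : H.Adj (f' p) u :=
        (SimpleGraph.mem_neighborFinset _ _ _).1 (Finset.mem_inter.1 huN1).1
      refine ⟨Function.update f' w u, ?_⟩
      have hfeq : ∀ z ∈ s', Function.update f' w u z = f' z := by
        intro z hz
        exact Function.update_of_ne (Finset.ne_of_mem_erase hz) u f'
      have hsmem : ∀ z ∈ s, z ≠ w → z ∈ s' := fun z hz hzw => Finset.mem_erase.2 ⟨hzw, hz⟩
      constructor
      · rw [hfeq x0 hx0s']; exact hf'x0
      constructor
      · intro a ha b hb hab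
        simp only [Finset.mem_coe] at ha hb
        by_cases haw : a = w
        · by_cases hbw : b = w
          · rw [haw, hbw]
          · exfalso
            rw [haw, Function.update_self, hfeq b (hsmem b hb hbw)] at hab
            exact huimg (hab ▸ Finset.mem_image_of_mem f' (hsmem b hb hbw))
        · by_cases hbw : b = w
          · exfalso
            rw [hbw, Function.update_self, hfeq a (hsmem a ha haw)] at hab
            exact huimg (hab ▸ Finset.mem_image_of_mem f' (hsmem a ha haw))
          · rw [hfeq a (hsmem a ha haw), hfeq b (hsmem b hb hbw)] at hab
            exact hf'inj (hsmem a ha haw) (hsmem b hb hbw) hab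
      constructor
      · intro z hz
        by_cases hzw : z = w
        · rw [hzw, Function.update_self]; exact huB
        · rw [hfeq z (hsmem z hz hzw)]; exact hf'B z (hsmem z hz hzw)
      constructor
      · intro z hz hzx
        by_cases hzw : z = w
        · subst hzw
          rw [Function.update_self, hfeq p hpS]
          exact huadj
        · have hzs' := hsmem z hz hzw
          rw [hfeq z hzs', hfeq (pr z) (hs'cl z hzs' hzx)]
          exact hf'adj z hzs' hzx
      constructor
      · intro z hz hzx hpz
        by_cases hzw : z = w
        · subst hzw
          rw [Function.update_self]
          intro hadj
          apply hunbr
          rw [hnbdef, if_neg hpz]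
          exact Finset.mem_inter.2 ⟨(SimpleGraph.mem_neighborFinset _ _ _).2 huadj,
            (SimpleGraph.mem_neighborFinset _ _ _).2 hadj⟩
        · have hzs' := hsmem z hz hzw
          rw [hfeq z hzs']
          exact hf'nbr z hzs' hzx hpz
      · intro z hz z' hz' hzx hz'x hzz'
        have key : ∀ y ∈ s', y ≠ x0 →
            c s(Function.update f' w u (pr w), Function.update f' w u w) ≠
            c s(Function.update f' w u (pr y), Function.update f' w u y) := by
          intro y hy hyx
          rw [Function.update_self, hfeq p hpS,
            hfeq y hy, hfeq (pr y) (hs'cl y hy hyx)]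
          intro hceq
          apply hucol
          rw [hcBdef, Finset.mem_filter]
          exact ⟨huN1, y, Finset.mem_erase.2 ⟨hyx, hy⟩, hceq.symm⟩
        by_cases hzw : z = w
        · subst hzw
          exact key z' (hsmem z' hz' (Ne.symm hzz')) hz'x
        · by_cases hz'w : z' = w
          · subst hz'w
            exact (key z (hsmem z hz hzw) hzx).symm
          · have hzs' := hsmem z hz hzw
            have hz's' := hsmem z' hz' hz'w
            rw [hfeq z hzs', hfeq (pr z) (hs'cl z hzs' hzx),
              hfeq z' hz's', hfeq (pr z') (hs'cl z' hz's' hz'x)]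
            exact hf'col z hzs' z' hz's' hzx hz'x hzz'

lemma core {V W : Type*} [Fintype V] [Fintype W] [DecidableEq V] [DecidableEq W]
    (r k ℓ : ℕ) (hr : 3 ≤ r)
    (T : SimpleGraph W) [DecidableRel T.Adj] (hT : T.IsTree) (hTk : T.edgeSet.ncard = k)
    (x0 : W) (hx0 : {y : W | T.Adj x0 y ∧ (T.neighborSet y).ncard = 1}.ncard = ℓ)
    (hl : 3 * k + 2 * (r - 3) < 4 * ℓ)
    (H : SimpleGraph V) [DecidableRel H.Adj]
    (hK : ∀ x y : V, x ≠ y → ((H.neighborFinset x) ∩ (H.neighborFinset y)).card < r)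
    (c : Sym2 V → ℕ) (hc : IsProperEdgeColoring H c)
    (hbig : (k - 1) * Fintype.card V < 2 * H.edgeSet.ncard) :
    HasRainbowCopy H c T := by
  -- edge count in terms of ec
  have hec : 2 * H.edgeSet.ncard = ec H Finset.univ := by
    rw [ec_eq_sum]
    have h1 : ∀ v : V, degIn H Finset.univ v = H.degree v := fun v => by
      rw [degIn, Finset.inter_univ]; rfl
    rw [Finset.sum_congr rfl (fun v _ => h1 v), SimpleGraph.sum_degrees_eq_twice_card_edges]
    congr 1
    rw [← SimpleGraph.coe_edgeFinset, Set.ncard_coe_finset]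
  have hbig2 : (k - 1) * (Finset.univ : Finset V).card < ec H Finset.univ := by
    rw [Finset.card_univ]; omega
  obtain ⟨B, hBne, hBdeg, hBec⟩ :=
    exists_good H k (Finset.univ : Finset V).card Finset.univ le_rfl hbig2
  obtain ⟨v0, hv0B, hv0deg⟩ := exists_big H hBec
  -- tree facts
  have hcardW : Fintype.card W = k + 1 := by
    have h2 := hT.card_edgeFinset
    have h3 : T.edgeSet.ncard = T.edgeFinset.card := by
      rw [← SimpleGraph.coe_edgeFinset, Set.ncard_coe_finset]
    omega
  have hdegy : ∀ y : W, (T.neighborSet y).ncard = T.degree y := fun y => by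
    rw [← Nat.card_coe_set_eq, Nat.card_eq_fintype_card,
      SimpleGraph.card_neighborSet_eq_degree]
  set L0 := Finset.univ.filter (fun y : W => T.Adj x0 y ∧ T.degree y = 1) with hL0def
  have hL0card : L0.card = ℓ := by
    rw [← hx0]
    have hset : {y : W | T.Adj x0 y ∧ (T.neighborSet y).ncard = 1} = ↑L0 := by
      ext y
      simp only [hL0def, Set.mem_setOf_eq, Finset.coe_filter, Finset.mem_univ, true_and,
        hdegy y]
    rw [hset, Set.ncard_coe_finset]
  have hlk : ℓ ≤ k := by
    have h1 : L0 ⊆ T.neighborFinset x0 := by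
      intro y hy
      exact (SimpleGraph.mem_neighborFinset _ _ _).2 (Finset.mem_filter.1 hy).2.1
    have h2 : T.degree x0 ≤ T.edgeFinset.card := by
      apply Finset.card_le_card_of_injOn (fun y => s(x0, y))
      · intro y hy
        rw [Finset.mem_coe, SimpleGraph.mem_edgeFinset]
        exact ((SimpleGraph.mem_neighborFinset _ _ _).1 hy : T.Adj x0 y)
      · intro y1 h1' y2 h2' heq
        rcases Sym2.eq_iff.1 heq with ⟨-, h⟩ | ⟨ha, hb⟩
        · exact h
        · exact hb.trans ha
    have h3 : T.edgeSet.ncard = T.edgeFinset.card := by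
      rw [← SimpleGraph.coe_edgeFinset, Set.ncard_coe_finset]
    have h4 := Finset.card_le_card h1
    have h5 : (T.neighborFinset x0).card = T.degree x0 := rfl
    omega
  have hk1 : 1 ≤ k := by omega
  have hkey : 3 * k + 2 * r ≤ 4 * ℓ + 5 := by omega
  set S' := Finset.univ \ L0 with hS'def
  have hx0L0 : x0 ∉ L0 := by
    intro h
    exact T.irrefl (Finset.mem_filter.1 h).2.1
  have hx0S' : x0 ∈ S' := Finset.mem_sdiff.2 ⟨Finset.mem_univ _, hx0L0⟩
  have hS'card : S'.card + ℓ = k + 1 := by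
    rw [hS'def, Finset.card_sdiff_of_subset (Finset.subset_univ _), Finset.card_univ, hcardW, hL0card]
    omega
  set pr := par hT x0 with hprdef
  have hprx0 : pr x0 = x0 := by rw [hprdef]; exact par_x0 hT x0
  have hD : ∀ w, w ≠ x0 → depth hT x0 (pr w) < depth hT x0 w := by
    intro w hw; rw [hprdef]; exact depth_par hT x0 hw
  have hadjpar : ∀ w, w ≠ x0 → T.Adj w (pr w) := by
    intro w hw; rw [hprdef]; exact adj_par hT x0 hw
  have hleafpar : ∀ w ∈ L0, pr w = x0 := by
    intro w hw
    obtain ⟨-, hadj0, hdeg1⟩ := Finset.mem_filter.1 hw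
    have hwx0 : w ≠ x0 := by rintro rfl; exact T.irrefl hadj0
    have h1 : pr w ∈ T.neighborFinset w :=
      (SimpleGraph.mem_neighborFinset _ _ _).2 (hadjpar w hwx0)
    have h2 : x0 ∈ T.neighborFinset w :=
      (SimpleGraph.mem_neighborFinset _ _ _).2 hadj0.symm
    exact Finset.card_le_one.1 (le_of_eq hdeg1) _ h1 _ h2
  have hS'cl : ∀ w ∈ S', w ≠ x0 → pr w ∈ S' := by
    intro w hw hwx
    rw [hS'def, Finset.mem_sdiff]
    refine ⟨Finset.mem_univ _, fun hmem => ?_⟩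
    obtain ⟨-, hadj0, hdeg1⟩ := Finset.mem_filter.1 hmem
    have h1 : w ∈ T.neighborFinset (pr w) :=
      (SimpleGraph.mem_neighborFinset _ _ _).2 (hadjpar w hwx).symm
    have h2 : x0 ∈ T.neighborFinset (pr w) :=
      (SimpleGraph.mem_neighborFinset _ _ _).2 hadj0.symm
    exact hwx (Finset.card_le_one.1 (le_of_eq hdeg1) _ h1 _ h2)
  obtain ⟨f, hfx0, hfinj, hfB, hfadj, hfnbr, hfcol⟩ :=
    greedy H c hc r k ℓ hkey hr B hBdeg v0 hv0B hv0deg hK pr (depth hT x0) x0 hD S' hS'card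
      S'.card S' le_rfl hx0S' (Finset.Subset.refl _) hS'cl
  -- choosing the leaves
  set N0 := H.neighborFinset v0 ∩ B with hN0def
  set cBadN := (H.neighborFinset v0).filter
    (fun z => ∃ w ∈ S'.erase x0, c s(f (pr w), f w) = c s(v0, z)) with hcBdef
  set avail := N0 \ (S'.image f ∪ cBadN) with havdef
  have hcBcard : cBadN.card ≤ (S'.erase x0).card := by
    apply Finset.card_le_card_of_injOn
      (fun z => if h : ∃ w ∈ S'.erase x0, c s(f (pr w), f w) = c s(v0, z)
        then h.choose else x0)
    · intro z hz
      have hex := (Finset.mem_filter.1 hz).2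
      dsimp only
      rw [dif_pos hex]
      exact hex.choose_spec.1
    · intro z1 hz1 z2 hz2 heq
      simp only [Finset.mem_coe] at hz1 hz2
      have hex1 := (Finset.mem_filter.1 hz1).2
      have hex2 := (Finset.mem_filter.1 hz2).2
      dsimp only at heq
      rw [dif_pos hex1, dif_pos hex2] at heq
      have hc1 := hex1.choose_spec.2
      have hc2 := hex2.choose_spec.2
      rw [heq] at hc1
      have hcc : c s(v0, z1) = c s(v0, z2) := hc1 ▸ hc2
      by_contra hne12
      have hadj1 : H.Adj v0 z1 :=
        (SimpleGraph.mem_neighborFinset _ _ _).1 (Finset.mem_filter.1 hz1).1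
      have hadj2 : H.Adj v0 z2 :=
        (SimpleGraph.mem_neighborFinset _ _ _).1 (Finset.mem_filter.1 hz2).1
      have hedne : s(v0, z1) ≠ s(v0, z2) := by
        intro h
        rcases Sym2.eq_iff.1 h with ⟨-, h2⟩ | ⟨h1, -⟩
        · exact hne12 h2
        · exact hadj2.ne h1
      have he1 : s(v0, z1) ∈ H.edgeSet := hadj1
      have he2 : s(v0, z2) ∈ H.edgeSet := hadj2
      exact hc he1 he2 hedne ⟨v0, Sym2.mem_mk_left _ _, Sym2.mem_mk_left _ _⟩ hcc
  have hN0card : k ≤ N0.card := hv0deg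
  have hsub : N0 ⊆ avail ∪ cBadN := by
    intro z hz
    by_cases hza : z ∈ avail
    · exact Finset.mem_union.2 (Or.inl hza)
    · refine Finset.mem_union.2 (Or.inr ?_)
      rw [havdef, Finset.mem_sdiff] at hza
      push_neg at hza
      rcases Finset.mem_union.1 (hza hz) with h1 | h1
      · obtain ⟨u, huS, hfu⟩ := Finset.mem_image.1 h1
        have hzadj : H.Adj v0 z :=
          (SimpleGraph.mem_neighborFinset _ _ _).1 (Finset.mem_inter.1 hz).1
        have hux0 : u ≠ x0 := by
          rintro rfl
          rw [hfx0] at hfu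
          exact H.irrefl (hfu ▸ hzadj)
        have hpru : pr u = x0 := by
          by_contra hpux
          exact hfnbr u huS hux0 hpux (hfu ▸ hzadj)
        rw [hcBdef, Finset.mem_filter]
        refine ⟨(Finset.mem_inter.1 hz).1, u, Finset.mem_erase.2 ⟨hux0, huS⟩, ?_⟩
        rw [hpru, hfx0, hfu]
      · exact h1
  have hereaseS' : (S'.erase x0).card + 1 = S'.card := by
    have h1 := Finset.card_erase_of_mem hx0S'
    have h2 : 0 < S'.card := Finset.card_pos.2 ⟨x0, hx0S'⟩
    omega
  have havail : ℓ ≤ avail.card := by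
    have h1 : N0.card ≤ avail.card + cBadN.card :=
      (Finset.card_le_card hsub).trans (Finset.card_union_le _ _)
    omega
  obtain ⟨L, hLsub, hLcard⟩ := Finset.exists_subset_card_eq havail
  have hcard0 : Fintype.card ↥L0 = Fintype.card ↥L := by
    rw [Fintype.card_coe, Fintype.card_coe, hL0card, hLcard]
  let e := Fintype.equivOfCardEq hcard0
  set g : W → V := fun w => if h : w ∈ L0 then ((e ⟨w, h⟩ : ↥L) : V) else f w with hgdef
  have hgL : ∀ (w) (h : w ∈ L0), g w ∈ L := by
    intro w h
    rw [hgdef]; dsimp only; rw [dif_pos h]; exact (e ⟨w, h⟩).2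
  have hgS : ∀ w ∉ L0, g w = f w := by
    intro w h
    rw [hgdef]; dsimp only; rw [dif_neg h]
  have hgx0 : g x0 = v0 := by rw [hgS x0 hx0L0, hfx0]
  have hS'mem : ∀ w, w ∉ L0 → w ∈ S' := fun w h =>
    Finset.mem_sdiff.2 ⟨Finset.mem_univ _, h⟩
  have hmemS' : ∀ w ∈ S', w ∉ L0 := fun w h => (Finset.mem_sdiff.1 h).2
  have havimg : ∀ z ∈ avail, z ∉ S'.image f := by
    intro z hz h
    exact (Finset.mem_sdiff.1 hz).2 (Finset.mem_union.2 (Or.inl h))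
  have havcB : ∀ z ∈ avail, z ∉ cBadN := by
    intro z hz h
    exact (Finset.mem_sdiff.1 hz).2 (Finset.mem_union.2 (Or.inr h))
  have havN0 : avail ⊆ N0 := Finset.sdiff_subset
  have havadj : ∀ z ∈ avail, H.Adj v0 z := by
    intro z hz
    exact (SimpleGraph.mem_neighborFinset _ _ _).1 (Finset.mem_inter.1 (havN0 hz)).1
  have hginj : Function.Injective g := by
    intro a b hab
    by_cases ha : a ∈ L0 <;> by_cases hb : b ∈ L0
    · have h1 : ((e ⟨a, ha⟩ : ↥L) : V) = ((e ⟨b, hb⟩ : ↥L) : V) := by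
        rw [hgdef] at hab; dsimp only at hab; rwa [dif_pos ha, dif_pos hb] at hab
      have h3 := e.injective (Subtype.coe_injective h1)
      exact congrArg Subtype.val h3
    · exfalso
      have h1 : g a ∈ avail := hLsub (hgL a ha)
      rw [hab, hgS b hb] at h1
      exact havimg _ h1 (Finset.mem_image_of_mem f (hS'mem b hb))
    · exfalso
      have h1 : g b ∈ avail := hLsub (hgL b hb)
      rw [← hab, hgS a ha] at h1
      exact havimg _ h1 (Finset.mem_image_of_mem f (hS'mem a ha))
    · rw [hgS a ha, hgS b hb] at hab
      exact hfinj (Finset.mem_coe.2 (hS'mem a ha)) (Finset.mem_coe.2 (hS'mem b hb)) hab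
  have hedge : ∀ w, w ≠ x0 → H.Adj (g (pr w)) (g w) := by
    intro w hw
    by_cases hwL : w ∈ L0
    · rw [hleafpar w hwL, hgx0]
      exact havadj _ (hLsub (hgL w hwL))
    · have hwS := hS'mem w hwL
      rw [hgS w hwL, hgS (pr w) (hmemS' _ (hS'cl w hwS hw))]
      exact hfadj w hwS hw
  have hmixed : ∀ w w', w ∈ L0 → w' ∈ S' → w' ≠ x0 →
      c s(g (pr w), g w) ≠ c s(g (pr w'), g w') := by
    intro w w' hw hw' hw'0
    have hz : g w ∈ avail := hLsub (hgL w hw)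
    have hzn : g w ∉ cBadN := havcB _ hz
    rw [hleafpar w hw, hgx0, hgS w' (hmemS' _ hw'), hgS (pr w') (hmemS' _ (hS'cl w' hw' hw'0))]
    intro hceq
    apply hzn
    rw [hcBdef, Finset.mem_filter]
    exact ⟨(Finset.mem_inter.1 (havN0 hz)).1, w', Finset.mem_erase.2 ⟨hw'0, hw'⟩, hceq.symm⟩
  have hmain : ∀ w w', w ≠ x0 → w' ≠ x0 → w ≠ w' →
      c s(g (pr w), g w) ≠ c s(g (pr w'), g w') := by
    intro w w' hw0 hw'0 hne
    by_cases hwL : w ∈ L0 <;> by_cases hw'L : w' ∈ L0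
    · rw [hleafpar w hwL, hleafpar w' hw'L, hgx0]
      have h1 : H.Adj v0 (g w) := havadj _ (hLsub (hgL w hwL))
      have h2 : H.Adj v0 (g w') := havadj _ (hLsub (hgL w' hw'L))
      have hne' : g w ≠ g w' := fun h => hne (hginj h)
      have he1 : s(v0, g w) ∈ H.edgeSet := h1
      have he2 : s(v0, g w') ∈ H.edgeSet := h2
      have hedne : s(v0, g w) ≠ s(v0, g w') := by
        intro h
        rcases Sym2.eq_iff.1 h with ⟨-, h2'⟩ | ⟨h1', -⟩
        · exact hne' h2'
        · exact h2.ne h1'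
      exact hc he1 he2 hedne ⟨v0, Sym2.mem_mk_left _ _, Sym2.mem_mk_left _ _⟩
    · exact hmixed w w' hwL (hS'mem w' hw'L) hw'0
    · exact (hmixed w' w hw'L (hS'mem w hwL) hw0).symm
    · have hwS := hS'mem w hwL
      have hw'S := hS'mem w' hw'L
      rw [hgS w hwL, hgS (pr w) (hmemS' _ (hS'cl w hwS hw0)),
        hgS w' hw'L, hgS (pr w') (hmemS' _ (hS'cl w' hw'S hw'0))]
      exact hfcol w hwS w' hw'S hw0 hw'0 hne
  have hchild : ∀ {a b : W}, T.Adj a b → ∃ w, w ≠ x0 ∧ s(a, b) = s(w, pr w) ∧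
      s(g a, g b) = s(g w, g (pr w)) := by
    intro a b hab
    rcases parent_or hT x0 hab with hpa | hpb
    · rw [← hprdef] at hpa
      have ha0 : a ≠ x0 := by
        rintro rfl
        rw [hprx0] at hpa
        exact T.irrefl (hpa ▸ hab)
      exact ⟨a, ha0, by rw [hpa], by rw [hpa]⟩
    · rw [← hprdef] at hpb
      have hb0 : b ≠ x0 := by
        rintro rfl
        rw [hprx0] at hpb
        rw [← hpb] at hab
        exact T.irrefl hab
      exact ⟨b, hb0, by rw [hpb]; exact Sym2.eq_swap, by rw [hpb]; exact Sym2.eq_swap⟩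
  refine ⟨⟨g, hginj⟩, ?_, ?_⟩
  · intro a b hab
    obtain ⟨w, hw0, -, hgs⟩ := hchild hab
    have h1 : s(g a, g b) ∈ H.edgeSet := by
      rw [hgs]
      exact (hedge w hw0).symm
    exact h1
  · intro a b a' b' hab ha'b' hne
    obtain ⟨w, hw0, hside, hgs⟩ := hchild hab
    obtain ⟨w', hw'0, hside', hgs'⟩ := hchild ha'b'
    have hww' : w ≠ w' := by
      rintro rfl
      exact hne (hside.trans hside'.symm)
    simp only [Function.Embedding.coeFn_mk]
    rw [hgs, hgs',
      show s(g w, g (pr w)) = s(g (pr w), g w) from Sym2.eq_swap,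
      show s(g w', g (pr w')) = s(g (pr w'), g w') from Sym2.eq_swap]
    exact hmain w w' hw0 hw'0 hww'


end Stmt17Aux

/-- Let `r ≥ 3` and let `T` be a tree with `k` edges having a vertex
`x₀` adjacent to `ℓ` leaves, where `ℓ > 3k/4 + (r-3)/2` (i.e. `4ℓ > 3k + 2(r-3)`).
Then every `K_{2,r}`-free graph `G` satisfies `2 · ex*(G,T) ≤ (k-1) · |V(G)|`. -/
theorem stmt17 {V W : Type*} [Fintype V] [Fintype W] (r k ℓ : ℕ) (hr : 3 ≤ r)
    (T : SimpleGraph W) (hT : T.IsTree) (hTk : T.edgeSet.ncard = k)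
    (x0 : W) (hx0 : {y : W | T.Adj x0 y ∧ (T.neighborSet y).ncard = 1}.ncard = ℓ)
    (hl : 3 * k + 2 * (r - 3) < 4 * ℓ)
    (G : SimpleGraph V)
    (hG : ¬ ContainsCopy G (completeBipartiteGraph (Fin 2) (Fin r))) :
    2 * rainbowExtremalNumber G T ≤ (k - 1) * Fintype.card V := by
  classical
  rw [rainbowExtremalNumber]
  set S := {m | ∃ H : SimpleGraph V, H ≤ G ∧ RainbowFree H T ∧ m = H.edgeSet.ncard} with hSdef
  by_cases hSne : S.Nonempty
  · have hbdd : BddAbove S := by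
      refine ⟨Fintype.card (Sym2 V), ?_⟩
      rintro m ⟨H, -, -, rfl⟩
      have h1 : H.edgeSet.ncard = H.edgeFinset.card := by
        rw [← SimpleGraph.coe_edgeFinset, Set.ncard_coe_finset]
      rw [h1, ← Finset.card_univ]
      exact Finset.card_le_univ _
    obtain ⟨H, hHG, hRF, hm⟩ := Nat.sSup_mem hSne hbdd
    rw [hm]
    by_contra hcon
    push_neg at hcon
    obtain ⟨c, hc, hnorb⟩ := hRF
    apply hnorb
    have hK : ∀ x y : V, x ≠ y → ((H.neighborFinset x) ∩ (H.neighborFinset y)).card < r := by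
      intro x y hxy
      by_contra hge
      push_neg at hge
      apply hG
      obtain ⟨t, hts, htc⟩ := Finset.exists_subset_card_eq hge
      have hcards : Fintype.card (Fin r) = Fintype.card ↥t := by
        rw [Fintype.card_coe, htc, Fintype.card_fin]
      let e2 := Fintype.equivOfCardEq hcards
      have htx : ∀ z ∈ t, H.Adj x z ∧ H.Adj y z := by
        intro z hz
        rcases Finset.mem_inter.1 (hts hz) with ⟨h1, h2⟩
        exact ⟨(SimpleGraph.mem_neighborFinset _ _ _).1 h1,
          (SimpleGraph.mem_neighborFinset _ _ _).1 h2⟩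
      set ι : (Fin 2) ⊕ (Fin r) → V :=
        Sum.elim (fun i => if i = 0 then x else y) (fun j => (e2 j : V)) with hidef
      have hival : ∀ j : Fin r, (e2 j : V) ∈ t := fun j => (e2 j).2
      have hinj : Function.Injective ι := by
        rintro (i | i) (j | j) hij <;>
          simp only [hidef, Sum.elim_inl, Sum.elim_inr] at hij
        · by_cases hi : i = 0 <;> by_cases hj : j = 0
          · rw [hi, hj]
          · rw [if_pos hi, if_neg hj] at hij; exact absurd hij hxy
          · rw [if_neg hi, if_pos hj] at hij; exact absurd hij.symm hxy
          · have : i = j := by omega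
            rw [this]
        · exfalso
          have h1 := htx _ (hival j)
          by_cases hi : i = 0
          · rw [if_pos hi] at hij; exact h1.1.ne' hij.symm
          · rw [if_neg hi] at hij; exact h1.2.ne' hij.symm
        · exfalso
          have h1 := htx _ (hival i)
          by_cases hj : j = 0
          · rw [if_pos hj] at hij; exact h1.1.ne' hij
          · rw [if_neg hj] at hij; exact h1.2.ne' hij
        · have h1 : (e2 i : V) = (e2 j : V) := hij
          have := e2.injective (Subtype.coe_injective h1)
          rw [this]
      refine ⟨⟨ι, hinj⟩, ?_⟩
      rintro (i | i) (j | j) hadj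
      · simp [completeBipartiteGraph] at hadj
      · simp only [Function.Embedding.coeFn_mk, hidef, Sum.elim_inl, Sum.elim_inr]
        have h1 := htx _ (hival j)
        by_cases hi : i = 0
        · rw [if_pos hi]; exact hHG h1.1
        · rw [if_neg hi]; exact hHG h1.2
      · simp only [Function.Embedding.coeFn_mk, hidef, Sum.elim_inl, Sum.elim_inr]
        have h1 := htx _ (hival i)
        by_cases hj : j = 0
        · rw [if_pos hj]; exact (hHG h1.1).symm
        · rw [if_neg hj]; exact (hHG h1.2).symm
      · simp [completeBipartiteGraph] at hadj
    exact Stmt17Aux.core r k ℓ hr T hT hTk x0 hx0 hl H hK c hc hcon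
  · rw [Set.not_nonempty_iff_eq_empty.1 hSne]
    simp
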